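/- Let Δ ∈ (0,1] and let γ = (1, Δ, Δ, Δ²)/(1+Δ)² be the two-qubit Gibbs vector. For every p ∈ Δ₄: if there exists q ∈ T₊(p) with f(q) < 0, then f(p*) < 0, where p* := p^{(2,1,3,4)} is the extreme point of the future thermal cone corresponding to the β-ordering (2,1,3,4). (In other words, a two-qubit energy-incoherent state is thermally entanglable if and only if the single extreme point p* is subspace entanglable.) -/

import Mathlib

open Finset

/-- The probability simplex Δ₄ ⊂ ℝ⁴. -/
def inSimplex (p : Fin 4 → ℝ) : Prop := (∀ i, 0 ≤ p i) ∧ ∑ i, p i = 1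

/-- The entanglement witness f(q) = 4 q₁ q₄ − (q₂ − q₃)². -/
noncomputable def fwit (q : Fin 4 → ℝ) : ℝ := 4 * q 0 * q 3 - (q 1 - q 2) ^ 2

/-- The two-qubit Gibbs vector γ = (1, Δ, Δ, Δ²)/(1+Δ)². -/
noncomputable def gibbs (Δ : ℝ) : Fin 4 → ℝ :=
  ![1 / (1 + Δ) ^ 2, Δ / (1 + Δ) ^ 2, Δ / (1 + Δ) ^ 2, Δ ^ 2 / (1 + Δ) ^ 2]

/-- The thermomajorization curve L_p(x) = min_{c ≥ 0} (c x + Σᵢ max(pᵢ − c γᵢ, 0)). -/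
noncomputable def Lcurve (γ p : Fin 4 → ℝ) (x : ℝ) : ℝ :=
  ⨅ c : { c : ℝ // 0 ≤ c }, (c.1 * x + ∑ i, max (p i - c.1 * γ i) 0)

/-- The future thermal cone T₊(p): states whose thermomajorization curve lies below that of p. -/
def futureCone (γ p : Fin 4 → ℝ) : Set (Fin 4 → ℝ) :=
  { q | inSimplex q ∧ ∀ x ∈ Set.Icc (0 : ℝ) 1, Lcurve γ q x ≤ Lcurve γ p x }

/-- x_k = γ_{π(1)} + ⋯ + γ_{π(k)}  (0-based permutation, k = 0,…,4). -/
noncomputable def partialX (γ : Fin 4 → ℝ) (π : Equiv.Perm (Fin 4)) (k : ℕ) : ℝ :=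
  ∑ j : Fin 4, if (j : ℕ) < k then γ (π j) else 0

/-- The extreme point p^π of the future thermal cone: p^π_{π(k)} = L_p(x_k) − L_p(x_{k−1}). -/
noncomputable def extremePt (γ p : Fin 4 → ℝ) (π : Equiv.Perm (Fin 4)) : Fin 4 → ℝ :=
  fun i =>
    Lcurve γ p (partialX γ π ((π.symm i : ℕ) + 1)) - Lcurve γ p (partialX γ π (π.symm i))

/- ---------------------------------------------------------------------------
Auxiliary lemmas
--------------------------------------------------------------------------- -/

instance : Nonempty { c : ℝ // 0 ≤ c } := ⟨⟨0, le_rfl⟩⟩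

lemma Lcurve_bdd (γ p : Fin 4 → ℝ) (x : ℝ) (hx : 0 ≤ x) :
    BddBelow (Set.range fun c : {c : ℝ // 0 ≤ c} =>
      c.1 * x + ∑ i, max (p i - c.1 * γ i) 0) := by
  refine ⟨0, fun y hy => ?_⟩
  obtain ⟨c, rfl⟩ := hy
  have h1 : 0 ≤ c.1 * x := mul_nonneg c.2 hx
  have h2 : 0 ≤ ∑ i, max (p i - c.1 * γ i) 0 :=
    Finset.sum_nonneg fun i _ => le_max_right _ _
  positivity

lemma Lcurve_le_at (γ p : Fin 4 → ℝ) (x : ℝ) (hx : 0 ≤ x) (c : ℝ) (hc : 0 ≤ c) :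
    Lcurve γ p x ≤ c * x + ∑ i, max (p i - c * γ i) 0 :=
  ciInf_le (Lcurve_bdd γ p x hx) ⟨c, hc⟩

lemma le_Lcurve (γ p : Fin 4 → ℝ) (x m : ℝ)
    (h : ∀ c : ℝ, 0 ≤ c → m ≤ c * x + ∑ i, max (p i - c * γ i) 0) :
    m ≤ Lcurve γ p x :=
  le_ciInf fun c => h c.1 c.2

lemma Lcurve_mono (γ p : Fin 4 → ℝ) (x y : ℝ) (hx : 0 ≤ x) (hxy : x ≤ y) :
    Lcurve γ p x ≤ Lcurve γ p y := by
  refine le_ciInf fun c => le_trans (Lcurve_le_at γ p x hx c.1 c.2) ?_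
  have : c.1 * x ≤ c.1 * y := mul_le_mul_of_nonneg_left hxy c.2
  linarith

lemma sum_subset_le_Lcurve (γ q : Fin 4 → ℝ)
    (S : Finset (Fin 4)) {x : ℝ} (hS : ∑ i ∈ S, γ i ≤ x) :
    (∑ i ∈ S, q i) ≤ Lcurve γ q x := by
  refine le_ciInf fun c => ?_
  have h1 : ∑ i ∈ S, (q i - c.1 * γ i) ≤ ∑ i, max (q i - c.1 * γ i) 0 :=
    le_trans (Finset.sum_le_sum fun i _ => le_max_left _ _)
      (Finset.sum_le_sum_of_subset_of_nonneg (Finset.subset_univ S)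
        (fun i _ _ => le_max_right _ _))
  have h2 : c.1 * ∑ i ∈ S, γ i ≤ c.1 * x := mul_le_mul_of_nonneg_left hS c.2
  have h3 : ∑ i ∈ S, (q i - c.1 * γ i) = ∑ i ∈ S, q i - c.1 * ∑ i ∈ S, γ i := by
    rw [Finset.sum_sub_distrib, Finset.mul_sum]
  linarith

lemma Lcurve_zero (γ p : Fin 4 → ℝ) (hγ : ∀ i, 0 < γ i) : Lcurve γ p 0 = 0 := by
  set c : ℝ := |p 0| / γ 0 + |p 1| / γ 1 + |p 2| / γ 2 + |p 3| / γ 3 with hcdef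
  have t0 : 0 ≤ |p 0| / γ 0 := div_nonneg (abs_nonneg _) (hγ 0).le
  have t1 : 0 ≤ |p 1| / γ 1 := div_nonneg (abs_nonneg _) (hγ 1).le
  have t2 : 0 ≤ |p 2| / γ 2 := div_nonneg (abs_nonneg _) (hγ 2).le
  have t3 : 0 ≤ |p 3| / γ 3 := div_nonneg (abs_nonneg _) (hγ 3).le
  have hc0 : 0 ≤ c := by rw [hcdef]; linarith
  have hle0 : p 0 - c * γ 0 ≤ 0 := by
    have h1 : |p 0| ≤ c * γ 0 := (div_le_iff₀ (hγ 0)).mp (by rw [hcdef]; linarith)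
    have h2 := le_abs_self (p 0); linarith
  have hle1 : p 1 - c * γ 1 ≤ 0 := by
    have h1 : |p 1| ≤ c * γ 1 := (div_le_iff₀ (hγ 1)).mp (by rw [hcdef]; linarith)
    have h2 := le_abs_self (p 1); linarith
  have hle2 : p 2 - c * γ 2 ≤ 0 := by
    have h1 : |p 2| ≤ c * γ 2 := (div_le_iff₀ (hγ 2)).mp (by rw [hcdef]; linarith)
    have h2 := le_abs_self (p 2); linarith
  have hle3 : p 3 - c * γ 3 ≤ 0 := by
    have h1 : |p 3| ≤ c * γ 3 := (div_le_iff₀ (hγ 3)).mp (by rw [hcdef]; linarith)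
    have h2 := le_abs_self (p 3); linarith
  refine le_antisymm ?_ ?_
  · have h := Lcurve_le_at γ p 0 le_rfl c hc0
    have hms : ∑ i, max (p i - c * γ i) 0 = 0 := by
      rw [Fin.sum_univ_four, max_eq_right hle0, max_eq_right hle1,
        max_eq_right hle2, max_eq_right hle3]
      ring
    rw [hms] at h
    linarith
  · refine le_Lcurve γ p 0 0 fun c' hc' => ?_
    have h2 : 0 ≤ ∑ i, max (p i - c' * γ i) 0 :=
      Finset.sum_nonneg fun i _ => le_max_right _ _
    linarith

lemma Lcurve_one (γ p : Fin 4 → ℝ) (hγsum : ∑ i, γ i = 1)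
    (hp : ∀ i, 0 ≤ p i) (hpsum : ∑ i, p i = 1) : Lcurve γ p 1 = 1 := by
  refine le_antisymm ?_ ?_
  · have h := Lcurve_le_at γ p 1 zero_le_one 0 le_rfl
    have hms : ∑ i, max (p i - 0 * γ i) 0 = 1 := by
      rw [← hpsum]
      refine Finset.sum_congr rfl fun i _ => ?_
      rw [zero_mul, sub_zero, max_eq_left (hp i)]
    rw [hms] at h
    linarith
  · refine le_Lcurve γ p 1 1 fun c hc => ?_
    have h2 : ∑ i, (p i - c * γ i) ≤ ∑ i, max (p i - c * γ i) 0 :=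
      Finset.sum_le_sum fun i _ => le_max_left _ _
    have h3 : ∑ i, (p i - c * γ i) = 1 - c := by
      rw [Finset.sum_sub_distrib, hpsum, ← Finset.mul_sum, hγsum]; ring
    linarith

lemma key_core (a b c d q0 q1 q2 q3 : ℝ)
    (hb : 0 ≤ b) (hd : 0 ≤ d) (hq3 : 0 ≤ q3)
    (hyx : q3 ≤ q0)
    (hq1a : q1 ≤ a) (h01 : q0 + q1 ≤ a + b)
    (hq3d : d ≤ q3)
    (hsum : q0 + q1 + q2 + q3 = 1) (habcd : a + b + c + d = 1)
    (hf : 2 * Real.sqrt (q0 * q3) < q1 - q2) :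
    2 * Real.sqrt (b * d) < a - c := by
  have hq0 : 0 ≤ q0 := le_trans hq3 hyx
  set sx := Real.sqrt q0 with hsx
  set sy := Real.sqrt q3 with hsy
  set sb := Real.sqrt b with hsbdef
  set sd := Real.sqrt d with hsddef
  have hsx2 : sx ^ 2 = q0 := Real.sq_sqrt hq0
  have hsy2 : sy ^ 2 = q3 := Real.sq_sqrt hq3
  have hsb2 : sb ^ 2 = b := Real.sq_sqrt hb
  have hsd2 : sd ^ 2 = d := Real.sq_sqrt hd
  have hxy : Real.sqrt (q0 * q3) = sx * sy := Real.sqrt_mul hq0 q3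
  have hbd : Real.sqrt (b * d) = sb * sd := Real.sqrt_mul hb d
  have hdy : sd ≤ sy := Real.sqrt_le_sqrt hq3d
  have hyx' : sy ≤ sx := Real.sqrt_le_sqrt hyx
  have hsd0 : 0 ≤ sd := Real.sqrt_nonneg d
  have hsb0 : 0 ≤ sb := Real.sqrt_nonneg b
  rw [hbd]
  rw [hxy] at hf
  rcases le_total sx sb with hcase | hcase
  · have h1 : (sx - sy) * (sx - sy) ≤ (sb - sd) * (sb - sd) :=
      mul_self_le_mul_self (by linarith) (by linarith)
    nlinarith [h1, hf]
  · have h1 : (sx - sy) * (sx - sy) ≤ (sx - sd) * (sx - sd) :=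
      mul_self_le_mul_self (by linarith) (by linarith)
    have h2 : sb * sb ≤ sx * sx := mul_self_le_mul_self hsb0 hcase
    have h3 : sb * sd ≤ sx * sd := mul_le_mul_of_nonneg_right hcase hsd0
    nlinarith [h1, h2, h3, hf]


lemma two_sqrt_lt (x y u : ℝ) (hx : 0 ≤ x) (hy : 0 ≤ y)
    (hu : 0 ≤ u) (h : 4 * x * y < u ^ 2) : 2 * Real.sqrt (x * y) < u := by
  have hs2 : (Real.sqrt (x * y)) ^ 2 = x * y := Real.sq_sqrt (mul_nonneg hx hy)
  have hs0 : 0 ≤ Real.sqrt (x * y) := Real.sqrt_nonneg _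
  nlinarith [hs2, hs0, sq_nonneg (u - 2 * Real.sqrt (x * y)),
    sq_nonneg (u + 2 * Real.sqrt (x * y))]

lemma final_ineq (b d u : ℝ) (hb : 0 ≤ b) (hd : 0 ≤ d)
    (h : 2 * Real.sqrt (b * d) < u) : 4 * b * d - u ^ 2 < 0 := by
  have hs2 : (Real.sqrt (b * d)) ^ 2 = b * d := Real.sq_sqrt (mul_nonneg hb hd)
  have hs0 : 0 ≤ Real.sqrt (b * d) := Real.sqrt_nonneg _
  nlinarith [hs2, hs0]

set_option maxHeartbeats 1600000 in
theorem thermally_entanglable_iff_extreme_point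
    (Δ : ℝ) (hΔ0 : 0 < Δ) (hΔ1 : Δ ≤ 1)
    (p : Fin 4 → ℝ) (hp : inSimplex p)
    (h : ∃ q ∈ futureCone (gibbs Δ) p, fwit q < 0) :
    fwit (extremePt (gibbs Δ) p (Equiv.swap 0 1)) < 0 := by
  obtain ⟨q, ⟨hqS, hqL⟩, hfq⟩ := h
  have ht : (0:ℝ) < 1 + Δ := by linarith
  have ht2 : (0:ℝ) < (1 + Δ) ^ 2 := pow_pos ht 2
  have hΔsq : Δ ^ 2 ≤ 1 := by nlinarith
  have hγ0 : gibbs Δ 0 = 1 / (1 + Δ) ^ 2 := rfl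
  have hγ1 : gibbs Δ 1 = Δ / (1 + Δ) ^ 2 := rfl
  have hγ2 : gibbs Δ 2 = Δ / (1 + Δ) ^ 2 := rfl
  have hγ3 : gibbs Δ 3 = Δ ^ 2 / (1 + Δ) ^ 2 := rfl
  have hγpos0 : 0 < gibbs Δ 0 := by rw [hγ0]; positivity
  have hγpos1 : 0 < gibbs Δ 1 := by rw [hγ1]; positivity
  have hγpos2 : 0 < gibbs Δ 2 := by rw [hγ2]; positivity
  have hγpos3 : 0 < gibbs Δ 3 := by rw [hγ3]; positivity
  have hγpos : ∀ i, 0 < gibbs Δ i := by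
    intro i
    fin_cases i
    · exact hγpos0
    · exact hγpos1
    · exact hγpos2
    · exact hγpos3
  have hγsum : ∑ i, gibbs Δ i = 1 := by
    rw [Fin.sum_univ_four, hγ0, hγ1, hγ2, hγ3]
    field_simp
    ring
  have hx12 : gibbs Δ 1 ≤ gibbs Δ 0 + gibbs Δ 1 := by linarith
  have hx23 : gibbs Δ 0 + gibbs Δ 1 ≤ gibbs Δ 0 + gibbs Δ 1 + gibbs Δ 2 := by linarith
  have hx31 : gibbs Δ 0 + gibbs Δ 1 + gibbs Δ 2 ≤ 1 := by
    rw [← hγsum, Fin.sum_univ_four]; linarith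
  have hx1I : gibbs Δ 1 ∈ Set.Icc (0:ℝ) 1 := ⟨hγpos1.le, by linarith⟩
  have hx2I : gibbs Δ 0 + gibbs Δ 1 ∈ Set.Icc (0:ℝ) 1 := ⟨by linarith, by linarith⟩
  have hx3I : gibbs Δ 0 + gibbs Δ 1 + gibbs Δ 2 ∈ Set.Icc (0:ℝ) 1 := ⟨by linarith, hx31⟩
  have hL0 : Lcurve (gibbs Δ) p 0 = 0 := Lcurve_zero _ p hγpos
  have hL1 : Lcurve (gibbs Δ) p 1 = 1 := Lcurve_one _ p hγsum hp.1 hp.2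
  set A : ℝ := Lcurve (gibbs Δ) p (gibbs Δ 1) with hA
  set B : ℝ := Lcurve (gibbs Δ) p (gibbs Δ 0 + gibbs Δ 1) with hB
  set C : ℝ := Lcurve (gibbs Δ) p (gibbs Δ 0 + gibbs Δ 1 + gibbs Δ 2) with hC
  -- partialX values
  have hk0 : partialX (gibbs Δ) (Equiv.swap 0 1) 0 = 0 := by simp [partialX]
  have hk1 : partialX (gibbs Δ) (Equiv.swap 0 1) 1 = gibbs Δ 1 := by
    simp +decide [partialX, Fin.sum_univ_four, Equiv.swap_apply_def]
  have hk2 : partialX (gibbs Δ) (Equiv.swap 0 1) 2 = gibbs Δ 0 + gibbs Δ 1 := by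
    simp +decide [partialX, Fin.sum_univ_four, Equiv.swap_apply_def]
    ring
  have hk3 : partialX (gibbs Δ) (Equiv.swap 0 1) 3
      = gibbs Δ 0 + gibbs Δ 1 + gibbs Δ 2 := by
    simp +decide [partialX, Fin.sum_univ_four, Equiv.swap_apply_def]
    ring
  have hk4 : partialX (gibbs Δ) (Equiv.swap 0 1) 4 = 1 := by
    simp +decide [partialX, Fin.sum_univ_four, Equiv.swap_apply_def]
    rw [← hγsum, Fin.sum_univ_four]
    ring
  -- extreme point components
  have hE0 : extremePt (gibbs Δ) p (Equiv.swap 0 1) 0 = B - A := by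
    simp +decide only [extremePt, Equiv.symm_swap, Equiv.swap_apply_left, Fin.val_one]
    rw [hk2, hk1]
  have hE1 : extremePt (gibbs Δ) p (Equiv.swap 0 1) 1 = A := by
    simp +decide only [extremePt, Equiv.symm_swap, Equiv.swap_apply_right, Fin.val_zero]
    rw [hk1, hk0, hL0]
    ring
  have hE2 : extremePt (gibbs Δ) p (Equiv.swap 0 1) 2 = C - B := by
    simp +decide only [extremePt, Equiv.symm_swap,
      Equiv.swap_apply_of_ne_of_ne (by decide : (2 : Fin 4) ≠ 0) (by decide : (2 : Fin 4) ≠ 1),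
      show ((2:Fin 4):ℕ) = 2 from rfl]
    rw [hk3, hk2]
  have hE3 : extremePt (gibbs Δ) p (Equiv.swap 0 1) 3 = 1 - C := by
    simp +decide only [extremePt, Equiv.symm_swap,
      Equiv.swap_apply_of_ne_of_ne (by decide : (3 : Fin 4) ≠ 0) (by decide : (3 : Fin 4) ≠ 1),
      show ((3:Fin 4):ℕ) = 3 from rfl]
    rw [hk4, hk3, hL1]
  -- bounds from the future cone
  have hbound : ∀ (S : Finset (Fin 4)) (x : ℝ), x ∈ Set.Icc (0:ℝ) 1 →
      (∑ i ∈ S, gibbs Δ i) ≤ x → (∑ i ∈ S, q i) ≤ Lcurve (gibbs Δ) p x := by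
    intro S x hxI hSx
    exact le_trans (sum_subset_le_Lcurve _ q S hSx) (hqL x hxI)
  have hq1A : q 1 ≤ A := by
    have := hbound {1} (gibbs Δ 1) hx1I (by simp)
    simpa using this
  have hq2A : q 2 ≤ A := by
    have := hbound {2} (gibbs Δ 1) hx1I (by simp [hγ1, hγ2])
    simpa using this
  have hq01B : q 0 + q 1 ≤ B := by
    have := hbound {0, 1} _ hx2I
      (by rw [Finset.sum_pair (by decide : (0:Fin 4) ≠ 1)])
    rwa [Finset.sum_pair (by decide : (0:Fin 4) ≠ 1)] at this
  have hq02B : q 0 + q 2 ≤ B := by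
    have := hbound {0, 2} _ hx2I
      (by rw [Finset.sum_pair (by decide : (0:Fin 4) ≠ 2), hγ1, hγ2])
    rwa [Finset.sum_pair (by decide : (0:Fin 4) ≠ 2)] at this
  have hq13B : q 1 + q 3 ≤ B := by
    have := hbound {1, 3} _ hx2I
      (by rw [Finset.sum_pair (by decide : (1:Fin 4) ≠ 3), hγ0, hγ1, hγ3,
            ← add_div, ← add_div, div_le_div_iff_of_pos_right ht2]
          linarith)
    rwa [Finset.sum_pair (by decide : (1:Fin 4) ≠ 3)] at this
  have hq23B : q 2 + q 3 ≤ B := by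
    have := hbound {2, 3} _ hx2I
      (by rw [Finset.sum_pair (by decide : (2:Fin 4) ≠ 3), hγ0, hγ1, hγ2, hγ3,
            ← add_div, ← add_div, div_le_div_iff_of_pos_right ht2]
          linarith)
    rwa [Finset.sum_pair (by decide : (2:Fin 4) ≠ 3)] at this
  have hq012C : q 0 + q 1 + q 2 ≤ C := by
    have := hbound {0, 1, 2} _ hx3I
      (by rw [Finset.sum_insert (by decide : (0:Fin 4) ∉ ({1,2} : Finset (Fin 4))),
              Finset.sum_pair (by decide : (1:Fin 4) ≠ 2)]
          linarith)
    rwa [Finset.sum_insert (by decide : (0:Fin 4) ∉ ({1,2} : Finset (Fin 4))),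
         Finset.sum_pair (by decide : (1:Fin 4) ≠ 2), ← add_assoc] at this
  have hq123C : q 1 + q 2 + q 3 ≤ C := by
    have := hbound {1, 2, 3} _ hx3I
      (by rw [Finset.sum_insert (by decide : (1:Fin 4) ∉ ({2,3} : Finset (Fin 4))),
              Finset.sum_pair (by decide : (2:Fin 4) ≠ 3), hγ0, hγ1, hγ2, hγ3,
            ← add_div, ← add_div, ← add_div, ← add_div,
            div_le_div_iff_of_pos_right ht2]
          linarith)
    rwa [Finset.sum_insert (by decide : (1:Fin 4) ∉ ({2,3} : Finset (Fin 4))),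
         Finset.sum_pair (by decide : (2:Fin 4) ≠ 3), ← add_assoc] at this
  have hqsum : q 0 + q 1 + q 2 + q 3 = 1 := by
    rw [← hqS.2, Fin.sum_univ_four]
  have hq3d : 1 - C ≤ q 3 := by linarith
  have hq0d : 1 - C ≤ q 0 := by linarith
  have hBA : 0 ≤ B - A := by
    have := Lcurve_mono (gibbs Δ) p _ _ hγpos1.le hx12
    rw [← hA, ← hB] at this
    linarith
  have hdC : 0 ≤ 1 - C := by
    have := Lcurve_mono (gibbs Δ) p _ 1 (by linarith) hx31
    rw [← hC, hL1] at this
    linarith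
  have habcd : A + (B - A) + (C - B) + (1 - C) = 1 := by ring
  -- from fwit q < 0 to the strict sqrt inequality
  have hq0n : 0 ≤ q 0 := hqS.1 0
  have hq3n : 0 ≤ q 3 := hqS.1 3
  have hfq' : 4 * q 0 * q 3 - (q 1 - q 2) ^ 2 < 0 := hfq
  -- main inequality
  have hkey : 2 * Real.sqrt ((B - A) * (1 - C)) < A - (C - B) := by
    rcases le_total (q 2) (q 1) with h12 | h12
    · have hf' : 2 * Real.sqrt (q 0 * q 3) < q 1 - q 2 :=
        two_sqrt_lt (q 0) (q 3) (q 1 - q 2) hq0n hq3n (by linarith) (by linarith)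
      rcases le_total (q 3) (q 0) with h03 | h03
      · exact key_core A (B - A) (C - B) (1 - C) (q 0) (q 1) (q 2) (q 3)
          hBA hdC hq3n h03 hq1A (by linarith) hq3d hqsum habcd hf'
      · exact key_core A (B - A) (C - B) (1 - C) (q 3) (q 1) (q 2) (q 0)
          hBA hdC hq0n h03 hq1A (by linarith) hq0d (by linarith) habcd
          (by rw [mul_comm (q 3) (q 0)]; exact hf')
    · have hsqswap : (q 2 - q 1) ^ 2 = (q 1 - q 2) ^ 2 := by ring
      have hf' : 2 * Real.sqrt (q 0 * q 3) < q 2 - q 1 :=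
        two_sqrt_lt (q 0) (q 3) (q 2 - q 1) hq0n hq3n (by linarith) (by linarith)
      rcases le_total (q 3) (q 0) with h03 | h03
      · exact key_core A (B - A) (C - B) (1 - C) (q 0) (q 2) (q 1) (q 3)
          hBA hdC hq3n h03 hq2A (by linarith) hq3d (by linarith) habcd hf'
      · exact key_core A (B - A) (C - B) (1 - C) (q 3) (q 2) (q 1) (q 0)
          hBA hdC hq0n h03 hq2A (by linarith) hq0d (by linarith) habcd
          (by rw [mul_comm (q 3) (q 0)]; exact hf')
  -- conclude
  have hgoal : fwit (extremePt (gibbs Δ) p (Equiv.swap 0 1)) =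
      4 * (B - A) * (1 - C) - (A - (C - B)) ^ 2 := by
    rw [fwit, hE0, hE1, hE2, hE3]
  rw [hgoal]
  exact final_ineq (B - A) (1 - C) (A - (C - B)) hBA hdC hkey
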